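/- Suppose r ≥ 2 and P is the convex hull in ℝ² of a finite set N ⊂ ℤ² of points with nonzero coefficients of a Laurent polynomial φ over a field k, with φ irreducible in k[v^{±1}, w^{±1}] and φ ∈ (v-1, w-1)^r. If P contains r+1 collinear lattice points, then a contradiction arises; equivalently, the Newton polygon of such an irreducible φ cannot contain r+1 lattice points on a single line, provided additionally that 2·area(P) < r² (i.e., φ is an r-nct). -/

import Mathlib

/-- The monomial `v` in `k[v^{±1}, w^{±1}] = k[ℤ × ℤ]`. -/
noncomputable def V (k : Type*) [Field k] : AddMonoidAlgebra k (ℤ × ℤ) :=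
  AddMonoidAlgebra.single (1, 0) 1

/-- The monomial `w`. -/
noncomputable def W (k : Type*) [Field k] : AddMonoidAlgebra k (ℤ × ℤ) :=
  AddMonoidAlgebra.single (0, 1) 1

/-- The natural embedding of `ℤ²` into `ℝ²`. -/
noncomputable def emb : ℤ × ℤ → ℝ × ℝ := fun p => ((p.1 : ℝ), (p.2 : ℝ))

/-- For a subset `U` of `ℤ²`, the `k`-span of the monomials `v^α w^β`,
`(α, β) ∈ U`, inside `k[v^{±1}, w^{±1}]`. -/
noncomputable def kspan (k : Type*) [Field k] (U : Set (ℤ × ℤ)) :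
    Submodule k (AddMonoidAlgebra k (ℤ × ℤ)) :=
  Submodule.span k
    ((fun p : ℤ × ℤ => (AddMonoidAlgebra.single p 1 : AddMonoidAlgebra k (ℤ × ℤ))) '' U)

namespace NctAux

open Polynomial LaurentPolynomial


variable {k : Type*} [Field k]

/-- Augmentation map. -/
noncomputable def eps (k : Type*) [Field k] : AddMonoidAlgebra k (ℤ × ℤ) →ₐ[k] k :=
  AddMonoidAlgebra.lift k k (ℤ × ℤ) 1

@[simp] lemma eps_single (a : ℤ × ℤ) (c : k) :
    eps k (AddMonoidAlgebra.single a c) = c := by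
  simp [eps, AddMonoidAlgebra.lift_single]

/-- "Derivative at (1,1) in direction v". -/
noncomputable def Dm (k : Type*) [Field k] (x : AddMonoidAlgebra k (ℤ × ℤ)) : k :=
  x.coeff.sum fun a c => c * (a.1 : k)

@[simp] lemma Dm_single (a : ℤ × ℤ) (c : k) :
    Dm k (AddMonoidAlgebra.single a c) = c * a.1 :=
  Finsupp.sum_single_index (by simp)

lemma Dm_add (x y : AddMonoidAlgebra k (ℤ × ℤ)) : Dm k (x + y) = Dm k x + Dm k y := by
  unfold Dm; rw [AddMonoidAlgebra.coeff_add]; exact Finsupp.sum_add_index' (by simp) (by intros; ring)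

lemma Dm_sub (x y : AddMonoidAlgebra k (ℤ × ℤ)) : Dm k (x - y) = Dm k x - Dm k y := by
  unfold Dm; rw [AddMonoidAlgebra.coeff_sub]; exact Finsupp.sum_sub_index (by intros; ring)

@[simp] lemma Dm_zero : Dm k 0 = 0 := by
  unfold Dm; rw [AddMonoidAlgebra.coeff_zero]; exact Finsupp.sum_zero_index

lemma Dm_mul (x y : AddMonoidAlgebra k (ℤ × ℤ)) :
    Dm k (x * y) = eps k x * Dm k y + Dm k x * eps k y := by
  induction x using AddMonoidAlgebra.induction_linear with
  | zero => simp
  | add f g hf hg => rw [add_mul, Dm_add, hf, hg, map_add, Dm_add]; ring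
  | single a c =>
    induction y using AddMonoidAlgebra.induction_linear with
    | zero => simp
    | add f g hf hg => rw [mul_add, Dm_add, hf, hg, map_add, Dm_add]; ring
    | single b d =>
      rw [AddMonoidAlgebra.single_mul_single]
      simp only [Dm_single, eps_single, Prod.fst_add]
      push_cast
      ring

lemma eps_mem {x : AddMonoidAlgebra k (ℤ × ℤ)}
    (hx : x ∈ Ideal.span {V k - 1, W k - 1}) : eps k x = 0 := by
  have h : Ideal.span {V k - 1, W k - 1} ≤ RingHom.ker (eps k) := by
    rw [Ideal.span_le]
    rintro x (rfl | rfl) <;> simp [RingHom.mem_ker, V, W]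
  exact h hx

lemma Dm_mem_sq {x : AddMonoidAlgebra k (ℤ × ℤ)}
    (hx : x ∈ (Ideal.span {V k - 1, W k - 1}) ^ 2) : Dm k x = 0 := by
  rw [pow_two] at hx
  refine Submodule.mul_induction_on hx (fun a ha b hb => ?_) (fun a b ha hb => ?_)
  · rw [Dm_mul, eps_mem ha, eps_mem hb]; ring
  · rw [Dm_add, ha, hb, add_zero]

lemma V_not_mem_sq : V k - 1 ∉ (Ideal.span {V k - 1, W k - 1}) ^ 2 := by
  intro h
  have h1 := Dm_mem_sq h
  rw [Dm_sub] at h1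
  rw [show (1 : AddMonoidAlgebra k (ℤ × ℤ)) = AddMonoidAlgebra.single 0 1 from
    AddMonoidAlgebra.one_def] at h1
  simp [V] at h1

/-- The subgroup of exponents `g` with `v^g - 1 ∈ I`. -/
def subS (k : Type*) [Field k] (I : Ideal (AddMonoidAlgebra k (ℤ × ℤ))) :
    AddSubgroup (ℤ × ℤ) where
  carrier := {g | AddMonoidAlgebra.single g (1 : k) - 1 ∈ I}
  zero_mem' := by
    have : AddMonoidAlgebra.single (0 : ℤ × ℤ) (1 : k) - 1 = 0 := by
      rw [← AddMonoidAlgebra.one_def, sub_self]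
    simp only [Set.mem_setOf_eq, this]
    exact I.zero_mem
  add_mem' := by
    intro a b ha hb
    have key : AddMonoidAlgebra.single (a + b) (1 : k) - 1
        = AddMonoidAlgebra.single a (1 : k) * (AddMonoidAlgebra.single b (1:k) - 1)
          + (AddMonoidAlgebra.single a (1:k) - 1) := by
      rw [mul_sub, AddMonoidAlgebra.single_mul_single, one_mul, mul_one]
      ring
    show AddMonoidAlgebra.single (a + b) (1 : k) - 1 ∈ I
    rw [key]
    exact I.add_mem (I.mul_mem_left _ hb) ha
  neg_mem' := by
    intro a ha
    have key : AddMonoidAlgebra.single (-a) (1 : k) - 1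
        = -(AddMonoidAlgebra.single (-a) (1:k) * (AddMonoidAlgebra.single a (1:k) - 1)) := by
      rw [mul_sub, AddMonoidAlgebra.single_mul_single, one_mul, mul_one, neg_add_cancel,
        ← AddMonoidAlgebra.one_def]
      ring
    show AddMonoidAlgebra.single (-a) (1 : k) - 1 ∈ I
    rw [key]
    exact I.neg_mem (I.mul_mem_left _ ha)

lemma mem_subS_of_V {I : Ideal (AddMonoidAlgebra k (ℤ × ℤ))} (hV : V k - 1 ∈ I) (m : ℤ) :
    AddMonoidAlgebra.single ((m, 0) : ℤ × ℤ) (1 : k) - 1 ∈ I := by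
  have h10 : ((1, 0) : ℤ × ℤ) ∈ subS k I := hV
  have hm := (subS k I).zsmul_mem h10 m
  have : m • ((1, 0) : ℤ × ℤ) = (m, 0) := by simp
  rwa [this] at hm

lemma mem_span_V (m : ℤ) :
    AddMonoidAlgebra.single ((m, 0) : ℤ × ℤ) (1 : k) - 1 ∈ Ideal.span {V k - 1} :=
  mem_subS_of_V (Ideal.subset_span (Set.mem_singleton _)) m

lemma single_sub_one_mem (g : ℤ × ℤ) :
    AddMonoidAlgebra.single g (1 : k) - 1 ∈ Ideal.span {V k - 1, W k - 1} := by
  have hV : V k - 1 ∈ Ideal.span {V k - 1, W k - 1} :=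
    Ideal.subset_span (Set.mem_insert _ _)
  have hW : W k - 1 ∈ Ideal.span {V k - 1, W k - 1} :=
    Ideal.subset_span (Set.mem_insert_iff.mpr (Or.inr rfl))
  have h10 : ((1, 0) : ℤ × ℤ) ∈ subS k (Ideal.span {V k - 1, W k - 1}) := hV
  have h01 : ((0, 1) : ℤ × ℤ) ∈ subS k (Ideal.span {V k - 1, W k - 1}) := hW
  have hg : g = g.1 • ((1, 0) : ℤ × ℤ) + g.2 • ((0, 1) : ℤ × ℤ) := by
    simp
  have := (subS k _).add_mem ((subS k _).zsmul_mem h10 g.1) ((subS k _).zsmul_mem h01 g.2)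
  rwa [← hg] at this

lemma ker_snd {x : AddMonoidAlgebra k (ℤ × ℤ)}
    (hx : AddMonoidAlgebra.mapDomain Prod.snd x = (0 : AddMonoidAlgebra k ℤ)) :
    x ∈ Ideal.span {V k - 1} := by
  have hTx : AddMonoidAlgebra.mapDomain (fun g : ℤ × ℤ => ((0 : ℤ), g.2)) x = 0 := by
    have hcomp : (fun g : ℤ × ℤ => ((0 : ℤ), g.2)) = (fun n : ℤ => ((0 : ℤ), n)) ∘ Prod.snd :=
      rfl
    have hx' : Finsupp.mapDomain Prod.snd x.coeff = 0 := congrArg AddMonoidAlgebra.coeff hx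
    apply AddMonoidAlgebra.coeff_injective
    show Finsupp.mapDomain (fun g : ℤ × ℤ => ((0 : ℤ), g.2)) x.coeff = 0
    rw [hcomp, Finsupp.mapDomain_comp, hx', Finsupp.mapDomain_zero]
  have h2 : ∑ a ∈ x.coeff.support, AddMonoidAlgebra.single ((0 : ℤ), a.2) (x.coeff a)
      = (0 : AddMonoidAlgebra k (ℤ × ℤ)) := by
    have hdef : AddMonoidAlgebra.mapDomain (fun g : ℤ × ℤ => ((0 : ℤ), g.2)) x
        = ∑ a ∈ x.coeff.support, AddMonoidAlgebra.single ((0 : ℤ), a.2) (x.coeff a) := by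
      rw [AddMonoidAlgebra.mapDomain, Finsupp.mapDomain, AddMonoidAlgebra.ofCoeff_finsuppSum]
      rfl
    rw [← hdef, hTx]
  have h1 : ∑ a ∈ x.coeff.support, AddMonoidAlgebra.single a (x.coeff a) = x :=
    AddMonoidAlgebra.sum_coeff_single x
  have hxx : x = ∑ a ∈ x.coeff.support,
      (AddMonoidAlgebra.single a (x.coeff a) - AddMonoidAlgebra.single ((0 : ℤ), a.2) (x.coeff a)) := by
    rw [Finset.sum_sub_distrib, h1, h2, sub_zero]
  rw [hxx]
  refine Ideal.sum_mem _ (fun a _ => ?_)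
  have key : AddMonoidAlgebra.single a (x.coeff a) - AddMonoidAlgebra.single ((0 : ℤ), a.2) (x.coeff a)
      = AddMonoidAlgebra.single ((0 : ℤ), a.2) (x.coeff a)
        * (AddMonoidAlgebra.single ((a.1, (0 : ℤ)) : ℤ × ℤ) (1 : k) - 1) := by
    rw [mul_sub, AddMonoidAlgebra.single_mul_single, mul_one, mul_one]
    congr 2
    simp
  rw [key]
  exact Ideal.mul_mem_left _ _ (mem_span_V a.1)




lemma extent_of_dvd {g : AddMonoidAlgebra k ℤ} (hg : g ≠ 0) {r : ℕ}
    (hdvd : (AddMonoidAlgebra.single (1 : ℤ) (1 : k) - 1) ^ r ∣ g) :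
    ∃ a ∈ g.coeff.support, ∃ b ∈ g.coeff.support, (r : ℤ) ≤ b - a := by
  obtain ⟨q, hq⟩ := hdvd
  have hq0 : q ≠ 0 := by
    rintro rfl
    rw [mul_zero] at hq
    exact hg hq
  obtain ⟨n, q', hq'⟩ := LaurentPolynomial.exists_T_pow (R := k) q
  set p : k[X] := (Polynomial.X - 1) ^ r * q' with hp
  have hT1 : (AddMonoidAlgebra.single (1 : ℤ) (1 : k)) = LaurentPolynomial.T 1 := rfl
  have hkey : Polynomial.toLaurent p = g * LaurentPolynomial.T (n : ℤ) := by
    rw [hp, map_mul, map_pow, map_sub, Polynomial.toLaurent_X, Polynomial.toLaurent_one, hq',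
      hq, hT1]
    ring
  have hq'0 : q' ≠ 0 := by
    rintro rfl
    rw [map_zero] at hq'
    exact mul_ne_zero hq0 (LaurentPolynomial.isUnit_T (R := k) n).ne_zero hq'.symm
  have hX1 : (Polynomial.X - 1 : k[X]) = Polynomial.X - Polynomial.C 1 := by
    rw [Polynomial.C_1]
  have hXr : ((Polynomial.X - 1 : k[X]) ^ r) ≠ 0 :=
    pow_ne_zero _ (by rw [hX1]; exact Polynomial.X_sub_C_ne_zero 1)
  have hp0 : p ≠ 0 := mul_ne_zero hXr hq'0
  have hsupp : g.coeff.support.map (addRightEmbedding (n : ℤ)) = p.support.map Nat.castEmbedding := by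
    calc g.coeff.support.map (addRightEmbedding (n : ℤ))
        = (g * AddMonoidAlgebra.single ((n : ℤ)) (1 : k)).coeff.support :=
          (AddMonoidAlgebra.support_coeff_mul_single g 1 (fun y => by simp) _).symm
      _ = (Polynomial.toLaurent p).coeff.support := by
          rw [hkey]; rfl
      _ = p.support.map Nat.castEmbedding := LaurentPolynomial.support_coeff_toLaurent p
  have hdeg : (Nat.castEmbedding (p.natDegree) : ℤ) ∈ g.coeff.support.map (addRightEmbedding (n : ℤ)) := by
    rw [hsupp]
    exact Finset.mem_map_of_mem _ (Polynomial.natDegree_mem_support_of_nonzero hp0)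
  have htr : (Nat.castEmbedding (p.natTrailingDegree) : ℤ) ∈ g.coeff.support.map (addRightEmbedding (n : ℤ)) := by
    rw [hsupp]
    exact Finset.mem_map_of_mem _ (Polynomial.natTrailingDegree_mem_support_of_nonzero hp0)
  rw [Finset.mem_map] at hdeg htr
  obtain ⟨b, hb, hbe⟩ := hdeg
  obtain ⟨a, ha, hae⟩ := htr
  refine ⟨a, ha, b, hb, ?_⟩
  have hbe' : b + (n : ℤ) = (p.natDegree : ℤ) := hbe
  have hae' : a + (n : ℤ) = (p.natTrailingDegree : ℤ) := hae
  have h1 : p.natDegree = r + q'.natDegree := by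
    rw [hp, Polynomial.natDegree_mul hXr hq'0, Polynomial.natDegree_pow, hX1,
      Polynomial.natDegree_X_sub_C, mul_one]
  have h2 : p.natTrailingDegree = q'.natTrailingDegree := by
    rw [hp, Polynomial.natTrailingDegree_mul hXr hq'0]
    have : ((Polynomial.X - 1 : k[X]) ^ r).natTrailingDegree = 0 := by
      rw [Polynomial.natTrailingDegree_eq_zero]
      refine Or.inr ?_
      rw [Polynomial.coeff_zero_eq_eval_zero]
      simp only [Polynomial.eval_pow, Polynomial.eval_sub, Polynomial.eval_X,
        Polynomial.eval_one, zero_sub]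
      exact pow_ne_zero _ (neg_ne_zero.mpr one_ne_zero)
    rw [this, zero_add]
  have h3 : q'.natTrailingDegree ≤ q'.natDegree := Polynomial.natTrailingDegree_le_natDegree q'
  omega


/-- A unimodular change of coordinates on `ℤ²`. -/
def shear (u1 u2 A B : ℤ) (hbez : u1 * A + u2 * B = 1) : (ℤ × ℤ) ≃+ (ℤ × ℤ) where
  toFun q := (A * q.1 + B * q.2, -u2 * q.1 + u1 * q.2)
  invFun q := (u1 * q.1 - B * q.2, u2 * q.1 + A * q.2)
  left_inv q := by
    refine Prod.ext ?_ ?_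
    · show u1 * (A * q.1 + B * q.2) - B * (-u2 * q.1 + u1 * q.2) = q.1
      linear_combination q.1 * hbez
    · show u2 * (A * q.1 + B * q.2) + A * (-u2 * q.1 + u1 * q.2) = q.2
      linear_combination q.2 * hbez
  right_inv q := by
    refine Prod.ext ?_ ?_
    · show A * (u1 * q.1 - B * q.2) + B * (u2 * q.1 + A * q.2) = q.1
      linear_combination q.1 * hbez
    · show -u2 * (u1 * q.1 - B * q.2) + u1 * (u2 * q.1 + A * q.2) = q.2
      linear_combination q.2 * hbez
  map_add' p q := by
    refine Prod.ext ?_ ?_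
    · show A * (p + q).1 + B * (p + q).2 = (A * p.1 + B * p.2) + (A * q.1 + B * q.2)
      simp only [Prod.fst_add, Prod.snd_add]
      ring
    · show -u2 * (p + q).1 + u1 * (p + q).2 = (-u2 * p.1 + u1 * p.2) + (-u2 * q.1 + u1 * q.2)
      simp only [Prod.fst_add, Prod.snd_add]
      ring

lemma shear_apply (u1 u2 A B : ℤ) (hbez : u1 * A + u2 * B = 1) (q : ℤ × ℤ) :
    shear u1 u2 A B hbez q = (A * q.1 + B * q.2, -u2 * q.1 + u1 * q.2) := rfl





open MeasureTheory Set

/-- The linear map `(x,y) ↦ (αx+βy, γx+δy)` on `ℝ²`. -/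
noncomputable def mk2 (α β γ δ : ℝ) : (ℝ × ℝ) →ₗ[ℝ] (ℝ × ℝ) where
  toFun p := (α * p.1 + β * p.2, γ * p.1 + δ * p.2)
  map_add' p q := by simp only [Prod.fst_add, Prod.snd_add, Prod.mk_add_mk]; congr 1 <;> ring
  map_smul' m p := by
    simp only [Prod.smul_fst, Prod.smul_snd, smul_eq_mul, RingHom.id_apply, Prod.smul_mk]
    congr 1 <;> ring

lemma mk2_apply (α β γ δ : ℝ) (p : ℝ × ℝ) :
    mk2 α β γ δ p = (α * p.1 + β * p.2, γ * p.1 + δ * p.2) := rfl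

lemma det_mk2 (α β γ δ : ℝ) : LinearMap.det (mk2 α β γ δ) = α * δ - β * γ := by
  rw [← LinearMap.det_toMatrix (Module.Basis.finTwoProd ℝ), Matrix.det_fin_two]
  simp only [LinearMap.toMatrix_apply, Module.Basis.finTwoProd_zero, Module.Basis.finTwoProd_one,
    Module.Basis.coe_finTwoProd_repr, mk2_apply]
  simp only [Matrix.cons_val_zero, Matrix.cons_val_one, Matrix.head_cons]
  ring

lemma volume_mk2_image (α β γ δ : ℝ) (s : Set (ℝ × ℝ)) :
    volume (mk2 α β γ δ '' s) = ENNReal.ofReal |α * δ - β * γ| * volume s := by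
  rw [MeasureTheory.Measure.addHaar_image_linearMap, det_mk2]

lemma upper_tri {P : Set (ℝ × ℝ)} (hP : Convex ℝ P) {a b c : ℝ × ℝ}
    (ha : a ∈ P) (hb : b ∈ P) (hc : c ∈ P) (hab : a.2 = b.2) (hL : a.1 ≤ b.1)
    (hac : a.2 ≤ c.2) :
    ∃ R : Set (ℝ × ℝ), MeasurableSet R ∧ R ⊆ P ∧ (∀ p ∈ R, a.2 < p.2) ∧
      volume R = ENNReal.ofReal ((b.1 - a.1) * (c.2 - a.2) / 2) := by
  rcases eq_or_lt_of_le hac with heq | hlt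
  · refine ⟨∅, MeasurableSet.empty, empty_subset _, by simp, ?_⟩
    rw [← heq]
    simp
  · set l := a.2 with hl
    set u := c.2 with hu
    have hd0 : (0 : ℝ) < u - l := by linarith
    set f : ℝ → ℝ := fun y => a.1 + (y - l) / (u - l) * (c.1 - a.1) with hf
    set g : ℝ → ℝ := fun y => b.1 + (y - l) / (u - l) * (c.1 - b.1) with hg
    have hfc : Continuous f := by fun_prop
    have hgc : Continuous g := by fun_prop
    have hfg : ∀ y ∈ Ioo l u, f y ≤ g y := by
      intro y hy
      have ht0 : 0 ≤ (y - l) / (u - l) := div_nonneg (by linarith [hy.1]) hd0.le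
      have ht1 : (y - l) / (u - l) ≤ 1 := by
        rw [div_le_one hd0]; linarith [hy.2]
      have hLpos : 0 ≤ b.1 - a.1 := by linarith
      have := mul_nonneg hLpos (sub_nonneg.mpr ht1)
      simp only [hf, hg]
      nlinarith
    set R : Set (ℝ × ℝ) := Prod.swap ⁻¹' regionBetween f g (Ioo l u) with hR
    have hmeasR : MeasurableSet R :=
      (measurableSet_regionBetween hfc.measurable hgc.measurable measurableSet_Ioo).preimage
        measurable_swap
    refine ⟨R, hmeasR, ?_, ?_, ?_⟩
    · -- R ⊆ P
      rintro p hp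
      have hys : p.2 ∈ Ioo l u := hp.1
      have hxs : p.1 ∈ Ioo (f p.2) (g p.2) := hp.2
      set t := (p.2 - l) / (u - l) with htdef
      have ht0 : 0 ≤ t := div_nonneg (by linarith [hys.1]) hd0.le
      have ht1 : t ≤ 1 := by rw [htdef, div_le_one hd0]; linarith [hys.2]
      have htd : t * (u - l) = p.2 - l := div_mul_cancel₀ _ hd0.ne'
      have hP1 : ((1 - t) • a + t • c) ∈ P := hP ha hc (by linarith) ht0 (by ring)
      have hP2 : ((1 - t) • b + t • c) ∈ P := hP hb hc (by linarith) ht0 (by ring)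
      have hfy : ((1 - t) • a + t • c) = (f p.2, p.2) := by
        have h1 : ((1 - t) • a + t • c).1 = (1 - t) * a.1 + t * c.1 := by
          simp [Prod.smul_fst]
        have h2 : ((1 - t) • a + t • c).2 = (1 - t) * a.2 + t * c.2 := by
          simp [Prod.smul_snd]
        refine Prod.ext ?_ ?_
        · rw [h1]; simp only [hf]; ring
        · rw [h2]; simp only; linear_combination htd
      have hgy : ((1 - t) • b + t • c) = (g p.2, p.2) := by
        have h1 : ((1 - t) • b + t • c).1 = (1 - t) * b.1 + t * c.1 := by
          simp [Prod.smul_fst]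
        have h2 : ((1 - t) • b + t • c).2 = (1 - t) * b.2 + t * c.2 := by
          simp [Prod.smul_snd]
        refine Prod.ext ?_ ?_
        · rw [h1]; simp only [hg]; ring
        · rw [h2]; simp only; rw [← hab]; linear_combination htd
      have hfxgx : f p.2 < g p.2 := lt_trans hxs.1 hxs.2
      set s' := (p.1 - f p.2) / (g p.2 - f p.2) with hs'def
      have hs'0 : 0 ≤ s' := div_nonneg (by linarith [hxs.1]) (by linarith)
      have hs'1 : s' ≤ 1 := by
        rw [hs'def, div_le_one (by linarith)]; linarith [hxs.2]
      have hsd : s' * (g p.2 - f p.2) = p.1 - f p.2 :=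
        div_mul_cancel₀ _ (by linarith : g p.2 - f p.2 ≠ 0)
      have hcomb : p = (1 - s') • (f p.2, p.2) + s' • (g p.2, p.2) := by
        refine Prod.ext ?_ ?_
        · have : ((1 - s') • ((f p.2 : ℝ), p.2) + s' • ((g p.2 : ℝ), p.2)).1
              = (1 - s') * f p.2 + s' * g p.2 := by simp [Prod.smul_fst]
          rw [this]; linear_combination -hsd
        · have : ((1 - s') • ((f p.2 : ℝ), p.2) + s' • ((g p.2 : ℝ), p.2)).2
              = (1 - s') * p.2 + s' * p.2 := by simp [Prod.smul_snd]
          rw [this]; ring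
      rw [hcomb, ← hfy, ← hgy]
      exact hP hP1 hP2 (by linarith) hs'0 (by ring)
    · -- second coordinates
      intro p hp
      exact hp.1.1
    · -- volume computation
      have hswap : volume R = (volume : Measure ℝ).prod volume (regionBetween f g (Ioo l u)) := by
        rw [hR]
        rw [Measure.volume_eq_prod]
        exact (Measure.measurePreserving_swap).measure_preimage
          (measurableSet_regionBetween hfc.measurable hgc.measurable
            measurableSet_Ioo).nullMeasurableSet
      have hintf : IntegrableOn f (Ioo l u) volume :=
        (hfc.continuousOn.integrableOn_compact isCompact_Icc).mono_set Ioo_subset_Icc_self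
      have hintg : IntegrableOn g (Ioo l u) volume :=
        (hgc.continuousOn.integrableOn_compact isCompact_Icc).mono_set Ioo_subset_Icc_self
      rw [hswap, volume_regionBetween_eq_integral hintf hintg measurableSet_Ioo hfg]
      congr 1
      have h1 : ∀ y : ℝ, (g - f) y = (b.1 - a.1) / (u - l) * (u - y) := by
        intro y
        simp only [Pi.sub_apply, hf, hg]
        field_simp
        ring
      rw [← MeasureTheory.integral_Ioc_eq_integral_Ioo,
        ← intervalIntegral.integral_of_le hlt.le]
      calc ∫ y in l..u, (g - f) y
          = ∫ y in l..u, ((b.1 - a.1) / (u - l) * (u - y)) := by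
            apply intervalIntegral.integral_congr
            intro y _
            exact h1 y
        _ = (b.1 - a.1) / (u - l) * ∫ y in l..u, (u - y) :=
            intervalIntegral.integral_const_mul _ _
        _ = (b.1 - a.1) / (u - l) * ((u - l) * u - (u ^ 2 - l ^ 2) / 2) := by
            have hsub' : (∫ y in l..u, (u - y)) = (∫ _ in l..u, (u : ℝ)) - ∫ y in l..u, y :=
              intervalIntegral.integral_sub intervalIntegrable_const
                (continuous_id.intervalIntegrable _ _)
            rw [hsub', intervalIntegral.integral_const, integral_id, smul_eq_mul]
        _ = (b.1 - a.1) * (u - l) / 2 := by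
            field_simp
            ring

lemma lower_tri {P : Set (ℝ × ℝ)} (hP : Convex ℝ P) {a b c : ℝ × ℝ}
    (ha : a ∈ P) (hb : b ∈ P) (hc : c ∈ P) (hab : a.2 = b.2) (hL : a.1 ≤ b.1)
    (hca : c.2 ≤ a.2) :
    ∃ R : Set (ℝ × ℝ), MeasurableSet R ∧ R ⊆ P ∧ (∀ p ∈ R, p.2 < a.2) ∧
      volume R = ENNReal.ofReal ((b.1 - a.1) * (a.2 - c.2) / 2) := by
  set N : (ℝ × ℝ) →ₗ[ℝ] (ℝ × ℝ) := mk2 1 0 0 (-1) with hN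
  have hNapp : ∀ p : ℝ × ℝ, N p = (p.1, -p.2) := by
    intro p
    rw [hN, mk2_apply]
    norm_num
  have hNN : ∀ p : ℝ × ℝ, N (N p) = p := by
    intro p
    rw [hNapp, hNapp]
    simp
  have hNP : Convex ℝ (N '' P) := hP.linear_image N
  obtain ⟨R, hmeas, hsub, hy, hvol⟩ := upper_tri hNP (Set.mem_image_of_mem N ha)
    (Set.mem_image_of_mem N hb) (Set.mem_image_of_mem N hc)
    (by rw [hNapp, hNapp]; simpa using hab)
    (by rw [hNapp, hNapp]; exact hL)
    (by rw [hNapp, hNapp]; simpa using hca)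
  have hNcont : Continuous N := N.continuous_of_finiteDimensional
  have himg_pre : N '' R = N ⁻¹' R := by
    ext p
    constructor
    · rintro ⟨q, hq, rfl⟩
      simpa [hNN] using hq
    · intro hp
      exact ⟨N p, hp, hNN p⟩
  refine ⟨N '' R, ?_, ?_, ?_, ?_⟩
  · rw [himg_pre]
    exact hmeas.preimage hNcont.measurable
  · intro p hp
    obtain ⟨q, hq, rfl⟩ := hp
    obtain ⟨q', hq', hq'e⟩ := hsub hq
    rw [← hq'e, hNN]
    exact hq'
  · rintro p ⟨q, hq, rfl⟩
    have := hy q hq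
    rw [hNapp] at this ⊢
    simp only [hNapp] at this
    simp only
    linarith [this]
  · rw [volume_mk2_image]
    rw [hvol]
    have h1 : |(1 : ℝ) * (-1) - 0 * 0| = 1 := by norm_num
    rw [h1, ENNReal.ofReal_one, one_mul]
    congr 1
    rw [hNapp, hNapp, hNapp]
    ring

lemma two_tri {P : Set (ℝ × ℝ)} (hP : Convex ℝ P) {a b c c' : ℝ × ℝ}
    (ha : a ∈ P) (hb : b ∈ P) (hc : c ∈ P) (hc' : c' ∈ P) (hab : a.2 = b.2)
    (hL : a.1 ≤ b.1) (hup : a.2 ≤ c.2) (hdo : c'.2 ≤ a.2) :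
    ENNReal.ofReal ((b.1 - a.1) * (c.2 - c'.2)) ≤ 2 * volume P := by
  obtain ⟨R1, m1, s1, y1, v1⟩ := upper_tri hP ha hb hc hab hL hup
  obtain ⟨R2, m2, s2, y2, v2⟩ := lower_tri hP ha hb hc' hab hL hdo
  have hdisj : Disjoint R1 R2 := by
    rw [Set.disjoint_left]
    intro p hp1 hp2
    exact absurd (y2 p hp2) (not_lt.mpr (y1 p hp1).le)
  have hU : volume R1 + volume R2 = volume (R1 ∪ R2) :=
    (measure_union hdisj m2).symm
  have hle : volume (R1 ∪ R2) ≤ volume P := measure_mono (Set.union_subset s1 s2)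
  have hx1 : 0 ≤ (b.1 - a.1) * (c.2 - a.2) / 2 := by
    have := mul_nonneg (by linarith : (0:ℝ) ≤ b.1 - a.1) (by linarith : (0:ℝ) ≤ c.2 - a.2)
    linarith
  have hx2 : 0 ≤ (b.1 - a.1) * (a.2 - c'.2) / 2 := by
    have := mul_nonneg (by linarith : (0:ℝ) ≤ b.1 - a.1) (by linarith : (0:ℝ) ≤ a.2 - c'.2)
    linarith
  have key : ENNReal.ofReal ((b.1 - a.1) * (c.2 - c'.2)) = 2 * (volume R1 + volume R2) := by
    rw [v1, v2, ← ENNReal.ofReal_add hx1 hx2, two_mul, ← ENNReal.ofReal_add (by linarith)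
      (by linarith)]
    congr 1
    ring
  rw [key, hU]
  exact mul_le_mul' le_rfl hle


end NctAux

open MeasureTheory ENNReal in
/-- The Newton polygon of an `r`-nct (an irreducible Laurent polynomial `φ`
with `φ ∈ (v-1, w-1)^r` whose Newton polygon `P_φ` has `2·area(P_φ) < r²`)
cannot contain `r + 1` lattice points on a single line, when `r ≥ 2`. -/
theorem nct_no_collinear_points (k : Type*) [Field k] (r : ℕ) (hr : 2 ≤ r)
    (φ : AddMonoidAlgebra k (ℤ × ℤ))
    (hirr : Irreducible φ)
    (hmem : φ ∈ (Ideal.span {V k - 1, W k - 1}) ^ r)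
    (harea : 2 * volume (convexHull ℝ (emb '' (φ.coeff.support : Set (ℤ × ℤ)))) <
      (r : ℝ≥0∞) ^ 2) :
    ¬ ∃ S : Finset (ℤ × ℤ), S.card = r + 1 ∧
        (∀ p ∈ S, emb p ∈ convexHull ℝ (emb '' (φ.coeff.support : Set (ℤ × ℤ)))) ∧
        Collinear ℝ (emb '' (S : Set (ℤ × ℤ))) := by
  classical
  rintro ⟨S, hcard, hSP, hcol⟩
  have hS1 : 1 < S.card := by omega
  have hSne : S.Nonempty := Finset.card_pos.mp (by omega)
  obtain ⟨p₀, hp₀⟩ := hSne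
  obtain ⟨p₁, hp₁, hp₁0⟩ := Finset.exists_mem_ne hS1 p₀
  set d : ℤ × ℤ := p₁ - p₀ with hddef
  have hd0 : d ≠ 0 := sub_ne_zero.mpr hp₁0
  have hdor : d.1 ≠ 0 ∨ d.2 ≠ 0 := by
    by_contra h
    push_neg at h
    exact hd0 (Prod.ext h.1 h.2)
  have hgpos : 0 < Int.gcd d.1 d.2 := Int.gcd_pos_iff.mpr hdor
  set u : ℤ × ℤ := (d.1 / Int.gcd d.1 d.2, d.2 / Int.gcd d.1 d.2) with hudef
  have hucop : Int.gcd u.1 u.2 = 1 := Int.gcd_div_gcd_div_gcd hgpos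
  have hdu1 : (Int.gcd d.1 d.2 : ℤ) * u.1 = d.1 := Int.mul_ediv_cancel' (Int.gcd_dvd_left _ _)
  have hdu2 : (Int.gcd d.1 d.2 : ℤ) * u.2 = d.2 := Int.mul_ediv_cancel' (Int.gcd_dvd_right _ _)
  set A := Int.gcdA u.1 u.2 with hAdef
  set B := Int.gcdB u.1 u.2 with hBdef
  have hbez : u.1 * A + u.2 * B = 1 := by
    have h := Int.gcd_eq_gcd_ab u.1 u.2
    rw [hucop] at h
    exact_mod_cast h.symm
  -- collinearity gives an integral cross-product relation
  have hp₀im : emb p₀ ∈ emb '' (S : Set (ℤ × ℤ)) :=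
    Set.mem_image_of_mem _ (Finset.mem_coe.mpr hp₀)
  rw [collinear_iff_of_mem hp₀im] at hcol
  obtain ⟨v, hv⟩ := hcol
  have hcross : ∀ p ∈ S, (p.1 - p₀.1) * u.2 = (p.2 - p₀.2) * u.1 := by
    intro p hp
    obtain ⟨t, ht⟩ := hv (emb p) (Set.mem_image_of_mem _ (Finset.mem_coe.mpr hp))
    obtain ⟨t₁, ht₁⟩ := hv (emb p₁) (Set.mem_image_of_mem _ (Finset.mem_coe.mpr hp₁))
    have h1 : (p.1 : ℝ) = t * v.1 + (p₀.1 : ℝ) := by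
      have := congrArg Prod.fst ht
      simpa [emb] using this
    have h2 : (p.2 : ℝ) = t * v.2 + (p₀.2 : ℝ) := by
      have := congrArg Prod.snd ht
      simpa [emb] using this
    have h3 : (p₁.1 : ℝ) = t₁ * v.1 + (p₀.1 : ℝ) := by
      have := congrArg Prod.fst ht₁
      simpa [emb] using this
    have h4 : (p₁.2 : ℝ) = t₁ * v.2 + (p₀.2 : ℝ) := by
      have := congrArg Prod.snd ht₁
      simpa [emb] using this
    have hreal : ((p.1 : ℝ) - p₀.1) * ((p₁.2 : ℝ) - p₀.2)
        = ((p.2 : ℝ) - p₀.2) * ((p₁.1 : ℝ) - p₀.1) := by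
      rw [h1, h2, h3, h4]; ring
    have hd1' : d.1 = p₁.1 - p₀.1 := by rw [hddef, Prod.fst_sub]
    have hd2' : d.2 = p₁.2 - p₀.2 := by rw [hddef, Prod.snd_sub]
    have hZ : (p.1 - p₀.1) * d.2 = (p.2 - p₀.2) * d.1 := by
      rw [hd1', hd2']
      exact_mod_cast hreal
    have hgz : ((Int.gcd d.1 d.2 : ℤ)) ≠ 0 := by exact_mod_cast hgpos.ne'
    apply mul_left_cancel₀ hgz
    linear_combination hZ + (p.1 - p₀.1) * hdu2 - (p.2 - p₀.2) * hdu1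
  -- integral parameters along the primitive direction
  have hta : ∀ p ∈ S, p.1 - p₀.1 = ((p.1 - p₀.1) * A + (p.2 - p₀.2) * B) * u.1
      ∧ p.2 - p₀.2 = ((p.1 - p₀.1) * A + (p.2 - p₀.2) * B) * u.2 := by
    intro p hp
    have hc := hcross p hp
    constructor
    · linear_combination (-(p.1 - p₀.1)) * hbez + B * hc
    · linear_combination (-(p.2 - p₀.2)) * hbez - A * hc
  set mEq := NctAux.shear u.1 u.2 A B hbez with hmEq
  have hm2 : ∀ p ∈ S, (mEq p).2 = (mEq p₀).2 := by
    intro p hp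
    rw [hmEq, NctAux.shear_apply, NctAux.shear_apply]
    have h1 := (hta p hp).1
    have h2 := (hta p hp).2
    show -u.2 * p.1 + u.1 * p.2 = -u.2 * p₀.1 + u.1 * p₀.2
    linear_combination (-u.2) * h1 + u.1 * h2
  -- the transformed x-coordinates
  set X : Finset ℤ := S.image (fun p => (mEq p).1) with hXdef
  have hXcard : X.card = r + 1 := by
    rw [hXdef, Finset.card_image_of_injOn, hcard]
    intro p hp q hq hpq
    have : mEq p = mEq q := Prod.ext hpq (by rw [hm2 p hp, hm2 q hq])
    exact mEq.injective this
  have hXne : X.Nonempty := Finset.card_pos.mp (by omega)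
  have hXr : (r : ℤ) ≤ X.max' hXne - X.min' hXne := by
    have hsub : X ⊆ Finset.Icc (X.min' hXne) (X.max' hXne) := fun x hx =>
      Finset.mem_Icc.mpr ⟨Finset.min'_le _ _ hx, Finset.le_max' _ _ hx⟩
    have hcardle := Finset.card_le_card hsub
    rw [Int.card_Icc, hXcard] at hcardle
    omega
  -- transformed polynomial
  set σ := AddMonoidAlgebra.domCongr k k mEq with hσ
  set ψ := σ φ with hψ
  have hψirr : Irreducible ψ := hirr.map σ
  have hψ0 : ψ ≠ 0 := hψirr.ne_zero
  have hmemψ : ψ ∈ (Ideal.span {V k - 1, W k - 1}) ^ r := by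
    have h1 : ψ ∈ Ideal.map σ ((Ideal.span {V k - 1, W k - 1}) ^ r) :=
      Ideal.mem_map_of_mem _ hmem
    rw [Ideal.map_pow, Ideal.map_span, Set.image_insert_eq, Set.image_singleton] at h1
    have hgen : Ideal.span {σ (V k - 1), σ (W k - 1)} ≤ Ideal.span {V k - 1, W k - 1} := by
      rw [Ideal.span_le]
      rintro x (rfl | rfl)
      · rw [show σ (V k - 1) = AddMonoidAlgebra.single (mEq ((1, 0) : ℤ × ℤ)) (1 : k) - 1 by
          rw [map_sub, map_one, hσ,
            show V k = AddMonoidAlgebra.single ((1, 0) : ℤ × ℤ) (1 : k) from rfl,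
            AddMonoidAlgebra.domCongr_single]]
        exact NctAux.single_sub_one_mem _
      · rw [show σ (W k - 1) = AddMonoidAlgebra.single (mEq ((0, 1) : ℤ × ℤ)) (1 : k) - 1 by
          rw [map_sub, map_one, hσ,
            show W k = AddMonoidAlgebra.single ((0, 1) : ℤ × ℤ) (1 : k) from rfl,
            AddMonoidAlgebra.domCongr_single]]
        exact NctAux.single_sub_one_mem _
    exact Ideal.pow_right_mono hgen r h1
  have hψsupp : ψ.coeff.support = φ.coeff.support.map mEq.toEmbedding :=
    AddMonoidAlgebra.domCongr_support (R := k) (A := k) mEq φ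
  -- real-linear counterpart
  set Tr := NctAux.mk2 (A : ℝ) (B : ℝ) (-(u.2 : ℝ)) ((u.1 : ℝ)) with hTr
  have hcommute : ∀ p : ℤ × ℤ, emb (mEq p) = Tr (emb p) := by
    intro p
    rw [hmEq, NctAux.shear_apply, hTr, NctAux.mk2_apply]
    simp only [emb]
    rw [Prod.mk.injEq]
    constructor <;> push_cast <;> ring
  have himg : (emb '' (ψ.coeff.support : Set (ℤ × ℤ)))
      = Tr '' (emb '' (φ.coeff.support : Set (ℤ × ℤ))) := by
    rw [hψsupp, Finset.coe_map, ← Set.image_comp, ← Set.image_comp]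
    apply congrFun
    apply congrArg
    funext p
    exact hcommute p
  have hP'eq : convexHull ℝ (emb '' (ψ.coeff.support : Set (ℤ × ℤ)))
      = Tr '' (convexHull ℝ (emb '' (φ.coeff.support : Set (ℤ × ℤ)))) := by
    rw [himg, ← LinearMap.image_convexHull]
  have hdet1 : |(A : ℝ) * (u.1 : ℝ) - (B : ℝ) * (-(u.2 : ℝ))| = 1 := by
    have hb' : ((u.1 * A + u.2 * B : ℤ) : ℝ) = 1 := by rw [hbez]; norm_num
    push_cast at hb'
    rw [show (A : ℝ) * (u.1 : ℝ) - (B : ℝ) * (-(u.2 : ℝ)) = 1 by linear_combination hb']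
    exact abs_one
  have hPvol : volume (convexHull ℝ (emb '' (ψ.coeff.support : Set (ℤ × ℤ))))
      = volume (convexHull ℝ (emb '' (φ.coeff.support : Set (ℤ × ℤ)))) := by
    rw [hP'eq, hTr, NctAux.volume_mk2_image, hdet1, ENNReal.ofReal_one, one_mul]
  have harea2 : 2 * volume (convexHull ℝ (emb '' (ψ.coeff.support : Set (ℤ × ℤ))))
      < (r : ℝ≥0∞) ^ 2 := by
    rw [hPvol]; exact harea
  -- extremal points on the line
  obtain ⟨pa, hpaS, hpa1⟩ := Finset.mem_image.mp (X.min'_mem hXne)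
  obtain ⟨pb, hpbS, hpb1⟩ := Finset.mem_image.mp (X.max'_mem hXne)
  set P' := convexHull ℝ (emb '' (ψ.coeff.support : Set (ℤ × ℤ))) with hP'def
  have hP'conv : Convex ℝ P' := convex_convexHull ℝ _
  have hmemP' : ∀ p ∈ S, emb (mEq p) ∈ P' := by
    intro p hp
    show emb (mEq p) ∈ P'
    rw [hP'eq, hcommute]
    exact Set.mem_image_of_mem _ (hSP p hp)
  set a := emb (mEq pa) with hadef
  set b := emb (mEq pb) with hbdef
  have haP' : a ∈ P' := hmemP' pa hpaS
  have hbP' : b ∈ P' := hmemP' pb hpbS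
  have hab2 : a.2 = b.2 := by
    show ((mEq pa).2 : ℝ) = ((mEq pb).2 : ℝ)
    rw [hm2 pa hpaS, hm2 pb hpbS]
  have ha1 : a.1 = ((X.min' hXne : ℤ) : ℝ) := by
    show ((mEq pa).1 : ℝ) = _
    rw [hpa1]
  have hb1 : b.1 = ((X.max' hXne : ℤ) : ℝ) := by
    show ((mEq pb).1 : ℝ) = _
    rw [hpb1]
  have hL : a.1 ≤ b.1 := by
    rw [ha1, hb1]
    exact_mod_cast Finset.min'_le _ _ (X.max'_mem hXne)
  have hba : (r : ℝ) ≤ b.1 - a.1 := by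
    rw [ha1, hb1]
    have : ((r : ℤ) : ℝ) ≤ ((X.max' hXne - X.min' hXne : ℤ) : ℝ) := by exact_mod_cast hXr
    push_cast at this ⊢
    linarith
  -- support extremes
  set Y : Finset ℤ := ψ.coeff.support.image Prod.snd with hYdef
  have hNne : ψ.coeff.support.Nonempty := Finsupp.support_nonempty_iff.mpr (AddMonoidAlgebra.coeff_eq_zero.not.mpr hψ0)
  have hYne : Y.Nonempty := hNne.image _
  obtain ⟨cM, hcM, hcM2⟩ := Finset.mem_image.mp (Y.max'_mem hYne)
  obtain ⟨cm, hcm, hcm2⟩ := Finset.mem_image.mp (Y.min'_mem hYne)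
  set c := emb cM with hcdef
  set c' := emb cm with hc'def
  have hcP' : c ∈ P' :=
    subset_convexHull ℝ _ (Set.mem_image_of_mem _ (Finset.mem_coe.mpr hcM))
  have hc'P' : c' ∈ P' :=
    subset_convexHull ℝ _ (Set.mem_image_of_mem _ (Finset.mem_coe.mpr hcm))
  have hslab : P' ⊆ {z : ℝ × ℝ | ((Y.min' hYne : ℤ) : ℝ) ≤ z.2}
      ∩ {z : ℝ × ℝ | z.2 ≤ ((Y.max' hYne : ℤ) : ℝ)} := by
    apply convexHull_min
    · rintro z ⟨n, hn, rfl⟩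
      have hnY : n.2 ∈ Y := by
        rw [hYdef]
        exact Finset.mem_image_of_mem _ (Finset.mem_coe.mp hn)
      constructor
      · show ((Y.min' hYne : ℤ) : ℝ) ≤ (n.2 : ℝ)
        exact_mod_cast Finset.min'_le _ _ hnY
      · show (n.2 : ℝ) ≤ ((Y.max' hYne : ℤ) : ℝ)
        exact_mod_cast Finset.le_max' _ _ hnY
    · exact (convex_halfSpace_ge (LinearMap.snd ℝ ℝ ℝ).isLinear _).inter
        (convex_halfSpace_le (LinearMap.snd ℝ ℝ ℝ).isLinear _)
  have hc2 : c.2 = ((Y.max' hYne : ℤ) : ℝ) := by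
    show (cM.2 : ℝ) = _
    rw [hcM2]
  have hc'2 : c'.2 = ((Y.min' hYne : ℤ) : ℝ) := by
    show (cm.2 : ℝ) = _
    rw [hcm2]
  have hup : a.2 ≤ c.2 := by
    rw [hc2]
    exact (hslab haP').2
  have hdo : c'.2 ≤ a.2 := by
    rw [hc'2]
    exact (hslab haP').1
  have htri := NctAux.two_tri hP'conv haP' hbP' hcP' hc'P' hab2 hL hup hdo
  -- derive the height bound
  have hYmm : Y.min' hYne ≤ Y.max' hYne := Finset.min'_le _ _ (Y.max'_mem hYne)
  have hheight : 0 ≤ c.2 - c'.2 := by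
    rw [hc2, hc'2]
    simp only [sub_nonneg]
    exact_mod_cast hYmm
  have h1 : ENNReal.ofReal ((r : ℝ) * (c.2 - c'.2)) ≤ 2 * volume P' := by
    refine le_trans (ENNReal.ofReal_le_ofReal ?_) htri
    exact mul_le_mul_of_nonneg_right hba hheight
  have h2 : ENNReal.ofReal ((r : ℝ) * (c.2 - c'.2)) < ENNReal.ofReal ((r : ℝ) ^ 2) := by
    calc ENNReal.ofReal ((r : ℝ) * (c.2 - c'.2)) ≤ 2 * volume P' := h1
      _ < (r : ℝ≥0∞) ^ 2 := harea2
      _ = ENNReal.ofReal ((r : ℝ) ^ 2) := by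
          rw [← ENNReal.ofReal_natCast r, ← ENNReal.ofReal_pow (by positivity)]
  have h3 : (r : ℝ) * (c.2 - c'.2) < (r : ℝ) ^ 2 := by
    have hnn : 0 ≤ (r : ℝ) * (c.2 - c'.2) := mul_nonneg (by positivity) hheight
    exact (ENNReal.ofReal_lt_ofReal_iff_of_nonneg hnn).mp h2
  have hrpos : (0 : ℝ) < (r : ℝ) := by
    have : (0 : ℕ) < r := by omega
    exact_mod_cast this
  have h4 : c.2 - c'.2 < (r : ℝ) := by nlinarith
  have hYZ : Y.max' hYne - Y.min' hYne < (r : ℤ) := by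
    have hcast : ((Y.max' hYne : ℤ) : ℝ) - ((Y.min' hYne : ℤ) : ℝ) < (r : ℝ) := by
      rw [← hc2, ← hc'2]; exact h4
    exact_mod_cast hcast
  -- algebraic endgame
  set ρ := AddMonoidAlgebra.mapDomainRingHom k (AddMonoidHom.snd ℤ ℤ) with hρdef
  have hρ : ρ ψ = AddMonoidAlgebra.mapDomain Prod.snd ψ := rfl
  set tm1 : AddMonoidAlgebra k ℤ := AddMonoidAlgebra.single (1 : ℤ) (1 : k) - 1 with htm1
  have hmemρ : tm1 ^ r ∣ ρ ψ := by
    have h1 : ρ ψ ∈ Ideal.map ρ ((Ideal.span {V k - 1, W k - 1}) ^ r) :=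
      Ideal.mem_map_of_mem _ hmemψ
    rw [Ideal.map_pow, Ideal.map_span, Set.image_insert_eq, Set.image_singleton] at h1
    have hv0 : ρ (V k - 1) = 0 := by
      rw [map_sub, map_one]
      have hV1 : ρ (V k) = 1 := by
        calc ρ (V k)
            = AddMonoidAlgebra.mapDomain Prod.snd
              (AddMonoidAlgebra.single ((1, 0) : ℤ × ℤ) (1 : k)) := rfl
          _ = AddMonoidAlgebra.single ((0 : ℤ)) (1 : k) := AddMonoidAlgebra.mapDomain_single
          _ = 1 := (AddMonoidAlgebra.one_def).symm
      rw [hV1, sub_self]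
    have hw0 : ρ (W k - 1) = tm1 := by
      rw [map_sub, map_one, htm1]
      congr 1
      calc ρ (W k)
          = AddMonoidAlgebra.mapDomain Prod.snd
            (AddMonoidAlgebra.single ((0, 1) : ℤ × ℤ) (1 : k)) := rfl
        _ = AddMonoidAlgebra.single ((1 : ℤ)) (1 : k) := AddMonoidAlgebra.mapDomain_single
    rw [hv0, hw0] at h1
    have hle : Ideal.span ({(0 : AddMonoidAlgebra k ℤ), tm1} : Set _) ≤ Ideal.span {tm1} := by
      rw [Ideal.span_le]
      rintro x (rfl | rfl)
      · exact (Ideal.span {tm1}).zero_mem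
      · exact Ideal.subset_span rfl
    have h2' := Ideal.pow_right_mono hle r h1
    rw [Ideal.span_singleton_pow] at h2'
    exact (Ideal.mem_span_singleton).mp h2'
  by_cases h0 : ρ ψ = 0
  · -- then `V - 1` divides `ψ`, contradicting irreducibility + vanishing order
    have hker : ψ ∈ Ideal.span {V k - 1} := NctAux.ker_snd (by rw [← hρ]; exact h0)
    obtain ⟨e, he⟩ := (Ideal.mem_span_singleton).mp hker
    rcases hψirr.isUnit_or_isUnit he with hu | hu
    · obtain ⟨w0, hw0⟩ := hu
      have hmemV : (↑w0 : AddMonoidAlgebra k (ℤ × ℤ)) ∈ Ideal.span {V k - 1, W k - 1} := by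
        rw [hw0]
        exact Ideal.subset_span (Set.mem_insert _ _)
      have h1' : (↑w0⁻¹ : AddMonoidAlgebra k (ℤ × ℤ)) * ↑w0
          ∈ Ideal.span {V k - 1, W k - 1} :=
        Ideal.mul_mem_left _ _ hmemV
      rw [Units.inv_mul] at h1'
      have heps := NctAux.eps_mem h1'
      rw [map_one] at heps
      exact one_ne_zero heps
    · obtain ⟨w0, hw0⟩ := hu
      have hVmem : V k - 1 ∈ (Ideal.span {V k - 1, W k - 1}) ^ r := by
        have h2' : ψ * ↑w0⁻¹ ∈ (Ideal.span {V k - 1, W k - 1}) ^ r :=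
          Ideal.mul_mem_right _ _ hmemψ
        have hVe : ψ * ↑w0⁻¹ = V k - 1 := by
          rw [he, ← hw0, mul_assoc, Units.mul_inv, mul_one]
        rwa [hVe] at h2'
      exact NctAux.V_not_mem_sq (Ideal.pow_le_pow_right hr hVmem)
  · -- otherwise the support of `ρ ψ` is too wide
    obtain ⟨aa, haa, bb, hbb, habr⟩ := NctAux.extent_of_dvd h0 hmemρ
    rw [hρ] at haa hbb
    have haa' : aa ∈ Y := by
      rw [hYdef]
      exact Finsupp.mapDomain_support haa
    have hbb' : bb ∈ Y := by
      rw [hYdef]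
      exact Finsupp.mapDomain_support hbb
    have h5 : Y.min' hYne ≤ aa := Finset.min'_le _ _ haa'
    have h6 : bb ≤ Y.max' hYne := Finset.le_max' _ _ hbb'
    omega
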